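/- Let f : [0,∞) → ℝ be a continuous positive function with f' measurable and integrable, and suppose f'(t) + (α − k·f(t)^n)·f(t) ≤ 0 for all t > 0, where n ∈ ℕ, k > 0, and α − k·f(0)^n > 0. Then f(t) < f(0) for all t > 0. -/

import Mathlib

open MeasureTheory Set

/-- Comparison lemma: if `f` is continuous and positive on `[0,∞)`, `f'` is measurable and
integrable, `f'(t) + (α - k f(t)ⁿ) f(t) ≤ 0` for `t > 0`, with `k > 0` and
`α - k f(0)ⁿ > 0`, then `f(t) < f(0)` for all `t > 0`. -/
theorem comparison_decay (f : ℝ → ℝ) (α k : ℝ) (n : ℕ) (hn : 0 < n)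
    (hcont : ContinuousOn f (Ici 0))
    (hpos : ∀ t ≥ (0:ℝ), 0 < f t)
    (hdiff : ∀ t > (0:ℝ), DifferentiableAt ℝ f t)
    (hmeas : Measurable (deriv f))
    (hint : IntegrableOn (deriv f) (Ioi 0))
    (hk : 0 < k)
    (hineq : ∀ t > (0:ℝ), deriv f t + (α - k * f t ^ n) * f t ≤ 0)
    (hinit : 0 < α - k * f 0 ^ n) :
    ∀ t > (0:ℝ), f t < f 0 := by
  intro t₀ ht₀
  by_contra hcontra
  push_neg at hcontra
  -- hcontra : f 0 ≤ f t₀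
  -- Step 1: find δ > 0 with 0 < α - k * f t ^ n on Icc 0 δ
  have hg : ContinuousOn (fun t => α - k * f t ^ n) (Ici 0) :=
    continuousOn_const.sub (continuousOn_const.mul (hcont.pow n))
  have hg0 : ContinuousWithinAt (fun t => α - k * f t ^ n) (Ici 0) 0 := hg 0 self_mem_Ici
  have hev : {t | 0 < α - k * f t ^ n} ∈ nhdsWithin (0:ℝ) (Ici 0) := by
    have := hg0 (Ioi_mem_nhds hinit)
    simpa [Set.preimage, Set.mem_Ioi] using this
  obtain ⟨ε, hε, hsub⟩ := Metric.mem_nhdsWithin_iff.1 hev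
  set δ : ℝ := ε / 2 with hδdef
  have hδ : 0 < δ := by positivity
  have hδpos : ∀ t ∈ Icc (0:ℝ) δ, 0 < α - k * f t ^ n := by
    intro t ht
    apply hsub
    constructor
    · rw [Metric.mem_ball, Real.dist_eq, sub_zero, abs_of_nonneg ht.1]
      linarith [ht.2]
    · exact ht.1
  -- Step 2: f strictly decreasing on Icc 0 δ
  have hderiv_neg : ∀ t ∈ interior (Icc (0:ℝ) δ), deriv f t < 0 := by
    rw [interior_Icc]
    intro t ht
    have ht0 : 0 < t := ht.1
    have h1 := hineq t ht0
    have h2 : 0 < α - k * f t ^ n := hδpos t ⟨le_of_lt ht0, le_of_lt ht.2⟩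
    have h3 : 0 < f t := hpos t (le_of_lt ht0)
    nlinarith
  have hanti : StrictAntiOn f (Icc 0 δ) :=
    strictAntiOn_of_deriv_neg (convex_Icc 0 δ) (hcont.mono (Icc_subset_Ici_self)) hderiv_neg
  -- Step 3: the first return time τ
  set δ' : ℝ := min δ t₀ with hδ'def
  have hδ' : 0 < δ' := lt_min hδ ht₀
  set T : Set ℝ := Icc δ' t₀ ∩ f ⁻¹' (Ici (f 0)) with hTdef
  have hTne : T.Nonempty := ⟨t₀, ⟨min_le_right _ _, le_refl _⟩, hcontra⟩
  have hTclosed : IsClosed T :=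
    (hcont.mono (fun x hx => le_trans (le_of_lt hδ') hx.1)).preimage_isClosed_of_isClosed
      isClosed_Icc isClosed_Ici
  have hTbdd : BddBelow T := ⟨δ', fun x hx => hx.1.1⟩
  set τ : ℝ := sInf T with hτdef
  have hτmem : τ ∈ T := hTclosed.csInf_mem hTne hTbdd
  have hτδ' : δ' ≤ τ := hτmem.1.1
  have hτt₀ : τ ≤ t₀ := hτmem.1.2
  have hτpos : 0 < τ := lt_of_lt_of_le hδ' hτδ'
  have hfτ : f 0 ≤ f τ := hτmem.2
  -- Step 4: f t < f 0 on Ioo 0 τ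
  have hbelow : ∀ t ∈ Ioo (0:ℝ) τ, f t < f 0 := by
    intro t ht
    by_cases hcase : t < δ'
    · have h1 : t ∈ Icc (0:ℝ) δ := ⟨le_of_lt ht.1, le_of_lt (lt_of_lt_of_le hcase (min_le_left _ _))⟩
      have := hanti (left_mem_Icc.2 (le_of_lt hδ)) h1 ht.1
      exact this
    · push_neg at hcase
      by_contra hge
      push_neg at hge
      have : t ∈ T := ⟨⟨hcase, le_trans (le_of_lt ht.2) hτt₀⟩, hge⟩
      have : τ ≤ t := csInf_le hTbdd this
      exact absurd ht.2 (not_lt.2 this)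
  -- positive min of f on [0, τ]
  obtain ⟨x₀, hx₀mem, hx₀min⟩ := isCompact_Icc.exists_isMinOn (nonempty_Icc.2 (le_of_lt hτpos))
    (hcont.mono (fun x hx => hx.1) : ContinuousOn f (Icc 0 τ))
  set m : ℝ := f x₀ with hmdef
  have hm : 0 < m := hpos x₀ hx₀mem.1
  set c : ℝ := α - k * f 0 ^ n with hcdef
  -- deriv f ≤ -c*m on Ioo 0 τ
  have hder_bound : ∀ t ∈ Ioo (0:ℝ) τ, deriv f t ≤ -(c * m) := by
    intro t ht
    have ht0 : 0 < t := ht.1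
    have hft : 0 < f t := hpos t (le_of_lt ht0)
    have hlt : f t < f 0 := hbelow t ht
    have hpow : f t ^ n ≤ f 0 ^ n := pow_le_pow_left₀ (le_of_lt hft) (le_of_lt hlt) n
    have hc2 : c ≤ α - k * f t ^ n := by
      rw [hcdef]
      have := mul_le_mul_of_nonneg_left hpow (le_of_lt hk)
      linarith
    have hmf : m ≤ f t := hx₀min ⟨le_of_lt ht0, le_of_lt ht.2⟩
    have h1 := hineq t ht0
    nlinarith
  -- Step 5: FTC
  have hintτ : IntervalIntegrable (deriv f) volume 0 τ := by
    rw [intervalIntegrable_iff_integrableOn_Ioc_of_le (le_of_lt hτpos)]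
    exact hint.mono_set Ioc_subset_Ioi_self
  have hftc : ∫ y in (0:ℝ)..τ, deriv f y = f τ - f 0 := by
    apply intervalIntegral.integral_eq_sub_of_hasDerivAt_of_le (le_of_lt hτpos)
      (hcont.mono (fun x hx => hx.1))
      (fun x hx => (hdiff x hx.1).hasDerivAt) hintτ
  -- Step 6: bound the integral
  have hIoc : ∫ y in (0:ℝ)..τ, deriv f y = ∫ y in Ioo (0:ℝ) τ, deriv f y := by
    rw [intervalIntegral.integral_of_le (le_of_lt hτpos),
      ← MeasureTheory.integral_Ioc_eq_integral_Ioo]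
  have hbound : ∫ y in Ioo (0:ℝ) τ, deriv f y ≤ ∫ y in Ioo (0:ℝ) τ, -(c * m) := by
    apply setIntegral_mono_on
    · exact (hint.mono_set (fun x hx => hx.1 : Ioo (0:ℝ) τ ⊆ Ioi 0))
    · exact integrableOn_const measure_Ioo_lt_top.ne
    · exact measurableSet_Ioo
    · exact hder_bound
  have hconst : ∫ y in Ioo (0:ℝ) τ, -(c * m) = -(c * m) * τ := by
    rw [setIntegral_const]
    simp [Real.volume_Ioo, le_of_lt hτpos, ENNReal.toReal_ofReal, mul_comm]
  have hcm : 0 < c * m := mul_pos hinit hm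
  have : f τ - f 0 < 0 := by
    rw [← hftc, hIoc]
    calc ∫ y in Ioo (0:ℝ) τ, deriv f y ≤ -(c * m) * τ := by rw [← hconst]; exact hbound
    _ < 0 := by nlinarith
  linarith
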